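/- arXiv:1710.06759 — 2 statements merged into one kernel-verified Lean document; each statement's English description precedes it below -/
import Mathlib

section
/- Let (Z, 𝒜, μ) be a probability space, Φ : Z → Z a measurable map, and ψ : Z → ℝ^k measurable such that all products ψ_a ψ_b and ψ_a · (ψ_b ∘ Φ) are μ-integrable. Let X_1, X_2, … be an i.i.d. sequence of Z-valued random variables with law μ. Define the empirical matrices G_m = (1/m) Σ_{i=1}^m ψ(X_i) ψ(X_i)ᵀ and C_m = (1/m) Σ_{i=1}^m ψ(Φ(X_i)) ψ(X_i)ᵀ, and the limit matrices G = ∫ ψ(z) ψ(z)ᵀ dμ(z) and C = ∫ ψ(Φ(z)) ψ(z)ᵀ dμ(z). If G is invertible, then almost surely the EDMD matrices C_m G_m⁻¹ converge to C G⁻¹ as m → ∞ (in particular, G_m is almost surely eventually invertible). -/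
open MeasureTheory Filter

/-- Almost sure convergence of the EDMD matrices `C_m G_m⁻¹`, built from `m` i.i.d. samples
drawn from `μ`, to the Galerkin matrix `C G⁻¹`, provided the limiting Gram matrix `G` is
invertible; in particular the empirical Gram matrices `G_m` are almost surely eventually
invertible. -/
theorem edmd_tendsto_galerkin_ae
    {Z Ω : Type*} [MeasurableSpace Z] [MeasurableSpace Ω]
    (P : Measure Ω) [IsProbabilityMeasure P]
    (μ : Measure Z) [IsProbabilityMeasure μ]
    (Φ : Z → Z) (hΦ : Measurable Φ)
    (k : ℕ) (ψ : Z → Fin k → ℝ) (hψ : ∀ a : Fin k, Measurable fun z => ψ z a)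
    (hint : ∀ a b : Fin k, Integrable (fun z => ψ z a * ψ z b) μ)
    (hintΦ : ∀ a b : Fin k, Integrable (fun z => ψ (Φ z) a * ψ z b) μ)
    (X : ℕ → Ω → Z) (hX : ∀ i, Measurable (X i))
    (hiid : ProbabilityTheory.iIndepFun X P)
    (hlaw : ∀ i, Measure.map (X i) P = μ)
    (hG : IsUnit (Matrix.of fun a b : Fin k => ∫ z, ψ z a * ψ z b ∂μ).det) :
    ∀ᵐ ω ∂P,
      (∀ᶠ m : ℕ in atTop,
        IsUnit ((m : ℝ)⁻¹ • ∑ i ∈ Finset.range m,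
          Matrix.of fun a b : Fin k => ψ (X i ω) a * ψ (X i ω) b).det) ∧
      Tendsto
        (fun m : ℕ =>
          ((m : ℝ)⁻¹ • ∑ i ∈ Finset.range m,
            Matrix.of fun a b : Fin k => ψ (Φ (X i ω)) a * ψ (X i ω) b) *
          ((m : ℝ)⁻¹ • ∑ i ∈ Finset.range m,
            Matrix.of fun a b : Fin k => ψ (X i ω) a * ψ (X i ω) b)⁻¹)
        atTop
        (nhds ((Matrix.of fun a b : Fin k => ∫ z, ψ (Φ z) a * ψ z b ∂μ) *
               (Matrix.of fun a b : Fin k => ∫ z, ψ z a * ψ z b ∂μ)⁻¹)) := by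
  classical
  -- Strong law of large numbers for `f ∘ X i`, for any measurable integrable `f`.
  have key : ∀ f : Z → ℝ, Measurable f → Integrable f μ →
      ∀ᵐ ω ∂P, Tendsto (fun m : ℕ => (∑ i ∈ Finset.range m, f (X i ω)) / m)
        atTop (nhds (∫ z, f z ∂μ)) := by
    intro f hf hfint
    have hint0 : Integrable (fun ω => f (X 0 ω)) P := by
      have h1 : Integrable f (Measure.map (X 0) P) := by rw [hlaw 0]; exact hfint
      exact (integrable_map_measure h1.1 (hX 0).aemeasurable).mp h1
    have hindep : Pairwise (Function.onFun (ProbabilityTheory.IndepFun · · P) fun i ω => f (X i ω)) := by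
      intro i j hij
      exact (hiid.indepFun hij).comp hf hf
    have hident : ∀ i, ProbabilityTheory.IdentDistrib (fun ω => f (X i ω))
        (fun ω => f (X 0 ω)) P P := by
      intro i
      have h0 : ProbabilityTheory.IdentDistrib (X i) (X 0) P P :=
        ⟨(hX i).aemeasurable, (hX 0).aemeasurable, by rw [hlaw i, hlaw 0]⟩
      exact h0.comp hf
    have := ProbabilityTheory.strong_law_ae_real (fun i ω => f (X i ω)) hint0 hindep hident
    filter_upwards [this] with ω hω
    have : ∫ ω, f (X 0 ω) ∂P = ∫ z, f z ∂μ := by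
      rw [← hlaw 0, integral_map (hX 0).aemeasurable hf.aestronglyMeasurable]
    rwa [this] at hω
  have hmeasG : ∀ a b : Fin k, Measurable fun z => ψ z a * ψ z b :=
    fun a b => (hψ a).mul (hψ b)
  have hmeasC : ∀ a b : Fin k, Measurable fun z => ψ (Φ z) a * ψ z b :=
    fun a b => ((hψ a).comp hΦ).mul (hψ b)
  have hae : ∀ᵐ ω ∂P, ∀ p : Fin k × Fin k,
      Tendsto (fun m : ℕ => (∑ i ∈ Finset.range m, ψ (X i ω) p.1 * ψ (X i ω) p.2) / m)
        atTop (nhds (∫ z, ψ z p.1 * ψ z p.2 ∂μ)) ∧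
      Tendsto (fun m : ℕ => (∑ i ∈ Finset.range m, ψ (Φ (X i ω)) p.1 * ψ (X i ω) p.2) / m)
        atTop (nhds (∫ z, ψ (Φ z) p.1 * ψ z p.2 ∂μ)) := by
    rw [ae_all_iff]
    intro p
    filter_upwards [key _ (hmeasG p.1 p.2) (hint p.1 p.2),
      key _ (hmeasC p.1 p.2) (hintΦ p.1 p.2)] with ω h1 h2
    exact ⟨h1, h2⟩
  filter_upwards [hae] with ω hω
  set G : Matrix (Fin k) (Fin k) ℝ := Matrix.of fun a b => ∫ z, ψ z a * ψ z b ∂μ with hGdef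
  set C : Matrix (Fin k) (Fin k) ℝ := Matrix.of fun a b => ∫ z, ψ (Φ z) a * ψ z b ∂μ
  set Gm : ℕ → Matrix (Fin k) (Fin k) ℝ := fun m =>
    (m : ℝ)⁻¹ • ∑ i ∈ Finset.range m, Matrix.of fun a b => ψ (X i ω) a * ψ (X i ω) b with hGm
  set Cm : ℕ → Matrix (Fin k) (Fin k) ℝ := fun m =>
    (m : ℝ)⁻¹ • ∑ i ∈ Finset.range m, Matrix.of fun a b => ψ (Φ (X i ω)) a * ψ (X i ω) b
  have hGmT : Tendsto Gm atTop (nhds G) := by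
    refine tendsto_pi_nhds.2 ?_
    intro a
    rw [tendsto_pi_nhds]
    intro b
    have := (hω (a, b)).1
    simp only [div_eq_inv_mul] at this
    convert this using 2 with m
    simp [hGm, Matrix.sum_apply]
    rfl
  have hCmT : Tendsto Cm atTop (nhds C) := by
    refine tendsto_pi_nhds.2 ?_
    intro a
    rw [tendsto_pi_nhds]
    intro b
    have := (hω (a, b)).2
    simp only [div_eq_inv_mul] at this
    convert this using 2 with m
    simp [Cm, Matrix.sum_apply]
    rfl
  have hdetT : Tendsto (fun m => (Gm m).det) atTop (nhds G.det) :=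
    (Continuous.matrix_det continuous_id).continuousAt.tendsto.comp hGmT
  have hGdet : G.det ≠ 0 := by
    simpa [isUnit_iff_ne_zero] using hG
  have hev : ∀ᶠ m in atTop, (Gm m).det ≠ 0 :=
    hdetT (isOpen_compl_singleton.mem_nhds hGdet)
  constructor
  · exact hev.mono fun m hm => isUnit_iff_ne_zero.mpr hm
  · have hinv : Tendsto (fun m => (Gm m)⁻¹) atTop (nhds G⁻¹) := by
      have h1 : Tendsto (fun m => ((Gm m).det)⁻¹ • (Gm m).adjugate) atTop
          (nhds (G.det⁻¹ • G.adjugate)) :=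
        (hdetT.inv₀ hGdet).smul
          ((Continuous.matrix_adjugate continuous_id).continuousAt.tendsto.comp hGmT)
      have heq : ∀ A : Matrix (Fin k) (Fin k) ℝ, A⁻¹ = A.det⁻¹ • A.adjugate := by
        intro A
        rw [Matrix.inv_def, Ring.inverse_eq_inv']
      simpa only [heq] using h1
    exact hCmT.mul hinv
end

section
/- Let M be a set, n_c, k, p ∈ ℕ with n_c ≥ 1, Φ_j : M → M for j = 0, …, n_c − 1, g : M → ℝ^k, and K_0, …, K_{n_c−1} real k×k matrices satisfying g(Φ_j(y)) = K_jᵀ g(y) for all y ∈ M and all j; let L : M → ℝ and L_K : ℝ^k → ℝ satisfy L(y) = L_K(g(y)) for all y ∈ M. Fix an initial state y⁰ ∈ M. For a control sequence τ ∈ {0, …, n_c − 1}^p, define the full-model MPC objective J(τ) = Σ_{i=0}^{p−1} L(Y_i) with Y_0 = y⁰, Y_{i+1} = Φ_{τ_i}(Y_i), and the reduced objective J_K(τ) = Σ_{i=0}^{p−1} L_K(Z_i) with Z_0 = g(y⁰), Z_{i+1} = K_{τ_i}ᵀ Z_i. Then J(τ) = J_K(τ) for every τ ∈ {0, …, n_c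 − 1}^p, and consequently τ* minimizes J_K over {0, …, n_c − 1}^p if and only if τ* minimizes J over {0, …, n_c − 1}^p. -/
open Matrix

/-- Trajectory of the switched discrete system over a finite horizon of `p` steps:
`trajFin F y0 n` is the state at time `n`, with `y_{i+1} = F i y_i` for `i < p`. -/
def trajFin {α : Type*} {p : ℕ} (F : Fin p → α → α) (y0 : α) : ℕ → α
  | 0 => y0
  | n + 1 => if h : n < p then F ⟨n, h⟩ (trajFin F y0 n) else trajFin F y0 n

/-- Full-model MPC objective `J(τ) = Σ_{i=0}^{p-1} L(Y_i)` with `Y_0 = y0` and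
`Y_{i+1} = Φ_{τ_i}(Y_i)`. -/
def mpcCostFull {M : Type*} (n_c p : ℕ) (Φ : Fin n_c → M → M) (L : M → ℝ)
    (y0 : M) (τ : Fin p → Fin n_c) : ℝ :=
  ∑ n ∈ Finset.range p, L (trajFin (fun i y => Φ (τ i) y) y0 n)

/-- Reduced (K-ROM) MPC objective `J_K(τ) = Σ_{i=0}^{p-1} L_K(Z_i)` with `Z_0 = z0` and
`Z_{i+1} = K_{τ_i}ᵀ Z_i`. -/
def mpcCostROM (n_c k p : ℕ) (K : Fin n_c → Matrix (Fin k) (Fin k) ℝ)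
    (LK : (Fin k → ℝ) → ℝ) (z0 : Fin k → ℝ) (τ : Fin p → Fin n_c) : ℝ :=
  ∑ n ∈ Finset.range p, LK (trajFin (fun i z => (K (τ i))ᵀ.mulVec z) z0 n)

/-- Theorem 4 of the paper: under the exact intertwining relation `g (Φ j y) = (K j)ᵀ g y`
and the objective compatibility `L y = L_K (g y)`, the full and reduced MPC objectives
agree for every control sequence `τ ∈ {0,…,n_c-1}^p`, and consequently the optimal
solutions of the full and the K-ROM MPC problems coincide. -/
theorem koopman_mpc_objective_eq_and_argmin_iff
    {M : Type*} (n_c k p : ℕ) (hnc : 1 ≤ n_c)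
    (Φ : Fin n_c → M → M) (g : M → Fin k → ℝ)
    (K : Fin n_c → Matrix (Fin k) (Fin k) ℝ)
    (hK : ∀ (j : Fin n_c) (y : M), g (Φ j y) = (K j)ᵀ.mulVec (g y))
    (L : M → ℝ) (LK : (Fin k → ℝ) → ℝ) (hL : ∀ y : M, L y = LK (g y))
    (y0 : M) :
    (∀ τ : Fin p → Fin n_c,
        mpcCostFull n_c p Φ L y0 τ = mpcCostROM n_c k p K LK (g y0) τ) ∧
    (∀ τstar : Fin p → Fin n_c,
      ((∀ τ : Fin p → Fin n_c,
          mpcCostROM n_c k p K LK (g y0) τstar ≤ mpcCostROM n_c k p K LK (g y0) τ) ↔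
       (∀ τ : Fin p → Fin n_c,
          mpcCostFull n_c p Φ L y0 τstar ≤ mpcCostFull n_c p Φ L y0 τ))) := by
  have key : ∀ (τ : Fin p → Fin n_c) (n : ℕ),
      g (trajFin (fun i y => Φ (τ i) y) y0 n)
        = trajFin (fun i z => (K (τ i))ᵀ.mulVec z) (g y0) n := by
    intro τ n
    induction n with
    | zero => rfl
    | succ n ih =>
      simp only [trajFin]
      split
      · rw [hK, ih]
      · exact ih
  have hEq : ∀ τ : Fin p → Fin n_c,
      mpcCostFull n_c p Φ L y0 τ = mpcCostROM n_c k p K LK (g y0) τ := by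
    intro τ
    unfold mpcCostFull mpcCostROM
    refine Finset.sum_congr rfl fun n _ => ?_
    rw [hL, key]
  refine ⟨hEq, fun τstar => ?_⟩
  constructor
  · intro h τ; rw [hEq, hEq]; exact h τ
  · intro h τ; rw [← hEq, ← hEq]; exact h τ
end
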